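/- Let μ be a σ-finite measure, γ > 1, and u, w measurable with u ∈ L^{γ+1}(μ), w ∈ L^{γ+1}(μ). Then ‖ |u|^{γ−1}u − |w|^{γ−1}w ‖_{(γ+1)/γ} ≤ C (‖u‖_{γ+1}^{γ−1} + ‖w‖_{γ+1}^{γ−1}) ‖u − w‖_{γ+1} for a constant C depending only on γ. -/

import Mathlib

open MeasureTheory
open scoped ENNReal

private lemma hasDerivAt_signedPow {γ : ℝ} (hγ : 1 < γ) (x : ℝ) :
    HasDerivAt (fun y : ℝ => |y| ^ (γ - 1) * y) (γ * |x| ^ (γ - 1)) x := by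
  rcases eq_or_ne x 0 with rfl | hx
  · have h0 : γ * |(0:ℝ)| ^ (γ - 1) = 0 := by
      rw [abs_zero, Real.zero_rpow (by linarith), mul_zero]
    rw [h0, hasDerivAt_iff_tendsto_slope]
    have hcont : Filter.Tendsto (fun y : ℝ => |y| ^ (γ - 1)) (nhds 0) (nhds 0) := by
      have h1 : ContinuousAt (fun t : ℝ => t ^ (γ - 1)) |0| := by
        rw [abs_zero]
        exact (Real.continuousAt_rpow_const 0 (γ - 1) (Or.inr (by linarith)))
      have := h1.comp continuous_abs.continuousAt
      simpa [Function.comp_def, Real.zero_rpow (show γ - 1 ≠ 0 by linarith)] using this.tendsto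
    refine Filter.Tendsto.congr' ?_ (hcont.mono_left nhdsWithin_le_nhds)
    filter_upwards [self_mem_nhdsWithin] with y (hy : y ≠ 0)
    rw [slope_def_field]
    field_simp
    simp
  · have habs : HasDerivAt (fun y : ℝ => |y|) ((SignType.sign x : ℝ)) x := hasDerivAt_abs hx
    have h1 : HasDerivAt (fun y : ℝ => |y| ^ (γ - 1))
        ((SignType.sign x : ℝ) * (γ - 1) * |x| ^ (γ - 1 - 1)) x :=
      habs.rpow_const (Or.inl (abs_ne_zero.mpr hx))
    have h2 := h1.mul (hasDerivAt_id x)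
    simp only [id_eq, mul_one] at h2
    convert h2 using 1
    case e'_4 => rfl
    case e'_5 => rfl
    case e'_8 => rfl
    have hsx : (SignType.sign x : ℝ) * x = |x| := by
      rcases hx.lt_or_gt with h | h
      · simp [sign_neg h, abs_of_neg h]
      · simp [sign_pos h, abs_of_pos h]
    have hxa : |x| ≠ 0 := abs_ne_zero.mpr hx
    have hmm : |x| ^ (γ - 1 - 1) * |x| = |x| ^ (γ - 1) := by
      rw [← Real.rpow_add_one hxa (γ - 1 - 1)]
      ring_nf
    rw [show (SignType.sign x : ℝ) * (γ - 1) * |x| ^ (γ - 1 - 1) * x + |x| ^ (γ - 1)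
        = (γ - 1) * (|x| ^ (γ - 1 - 1) * ((SignType.sign x : ℝ) * x)) + |x| ^ (γ - 1) by ring,
      hsx, hmm]
    ring

private lemma pointwise_bound {γ : ℝ} (hγ : 1 < γ) (a b : ℝ) :
    |(|b| ^ (γ - 1) * b) - (|a| ^ (γ - 1) * a)| ≤
      γ * ((|a| ^ (γ - 1) + |b| ^ (γ - 1)) * |b - a|) := by
  have hconv : Convex ℝ (segment ℝ a b) := convex_segment a b
  have hbound : ∀ x ∈ segment ℝ a b,
      ‖γ * |x| ^ (γ - 1)‖ ≤ γ * (|a| ^ (γ - 1) + |b| ^ (γ - 1)) := by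
    intro x hx
    have hxm : |x| ≤ max |a| |b| := by
      rcases le_total a b with hab | hab
      · rw [segment_eq_Icc hab] at hx
        exact abs_le_max_abs_abs hx.1 hx.2
      · rw [segment_symm, segment_eq_Icc hab] at hx
        exact (abs_le_max_abs_abs hx.1 hx.2).trans (by rw [max_comm])
    have h1 : |x| ^ (γ - 1) ≤ (max |a| |b|) ^ (γ - 1) :=
      Real.rpow_le_rpow (abs_nonneg x) hxm (by linarith)
    have h2 : (max |a| |b|) ^ (γ - 1) ≤ |a| ^ (γ - 1) + |b| ^ (γ - 1) := by
      rcases max_cases |a| |b| with ⟨h, _⟩ | ⟨h, _⟩ <;> rw [h]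
      · nlinarith [Real.rpow_nonneg (abs_nonneg b) (γ - 1)]
      · nlinarith [Real.rpow_nonneg (abs_nonneg a) (γ - 1)]
    rw [Real.norm_eq_abs, abs_mul, abs_of_pos (by linarith : (0:ℝ) < γ),
      abs_of_nonneg (Real.rpow_nonneg (abs_nonneg x) _)]
    have : (0:ℝ) < γ := by linarith
    nlinarith [h1.trans h2]
  have := hconv.norm_image_sub_le_of_norm_hasDerivWithin_le
    (f := fun y : ℝ => |y| ^ (γ - 1) * y) (f' := fun x => γ * |x| ^ (γ - 1))
    (fun x _ => (hasDerivAt_signedPow hγ x).hasDerivWithinAt) hbound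
    (left_mem_segment ℝ a b) (right_mem_segment ℝ a b)
  simpa [Real.norm_eq_abs, mul_assoc] using this

theorem stmt15 (γ : ℝ) (hγ : 1 < γ) :
    ∃ C > 0, ∀ (α : Type) (_ : MeasurableSpace α) (μ : Measure α),
      SigmaFinite μ → ∀ u w : α → ℝ,
      MemLp u (ENNReal.ofReal (γ + 1)) μ →
      MemLp w (ENNReal.ofReal (γ + 1)) μ →
      eLpNorm (fun x => |u x| ^ (γ - 1) * u x - |w x| ^ (γ - 1) * w x)
          (ENNReal.ofReal ((γ + 1) / γ)) μ ≤
        ENNReal.ofReal C *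
          (eLpNorm u (ENNReal.ofReal (γ + 1)) μ ^ (γ - 1) +
            eLpNorm w (ENNReal.ofReal (γ + 1)) μ ^ (γ - 1)) *
          eLpNorm (u - w) (ENNReal.ofReal (γ + 1)) μ := by
  have hγ0 : (0:ℝ) < γ := by linarith
  have hγ1 : (0:ℝ) < γ - 1 := by linarith
  have hγp1 : (0:ℝ) < γ + 1 := by linarith
  refine ⟨γ, hγ0, ?_⟩
  intro α m μ _ u w hu hw
  set p : ℝ≥0∞ := ENNReal.ofReal ((γ + 1) / γ) with hp
  set q : ℝ≥0∞ := ENNReal.ofReal ((γ + 1) / (γ - 1)) with hq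
  set r : ℝ≥0∞ := ENNReal.ofReal (γ + 1) with hr
  have hpqr : 1 / p = 1 / q + 1 / r := by
    rw [hp, hq, hr, one_div, one_div, one_div,
      ← ENNReal.ofReal_inv_of_pos (by positivity),
      ← ENNReal.ofReal_inv_of_pos (by positivity),
      ← ENNReal.ofReal_inv_of_pos (by positivity),
      ← ENNReal.ofReal_add (by positivity) (by positivity)]
    congr 1
    field_simp
    ring
  have hum : AEStronglyMeasurable u μ := hu.1
  have hwm : AEStronglyMeasurable w μ := hw.1
  have hcont : Continuous (fun t : ℝ => |t| ^ (γ - 1)) :=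
    continuous_abs.rpow_const (fun x => Or.inr (by linarith))
  set ψ : α → ℝ := fun x => |u x| ^ (γ - 1) + |w x| ^ (γ - 1) with hψ
  have hψm : AEStronglyMeasurable ψ μ :=
    (hcont.comp_aestronglyMeasurable hum).add (hcont.comp_aestronglyMeasurable hwm)
  set f : α → ℝ := u - w with hf
  have hfm : AEStronglyMeasurable f μ := hum.sub hwm
  -- step 1: pointwise bound
  have step1 : eLpNorm (fun x => |u x| ^ (γ - 1) * u x - |w x| ^ (γ - 1) * w x) p μ ≤
      eLpNorm (γ • (ψ • f)) p μ := by
    apply eLpNorm_mono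
    intro x
    have hpt := pointwise_bound hγ (w x) (u x)
    simp only [Real.norm_eq_abs, Pi.smul_apply, Pi.mul_apply, hf, hψ, Pi.sub_apply, smul_eq_mul]
    rw [abs_mul, abs_of_pos hγ0, abs_mul,
      abs_of_nonneg (by positivity : (0:ℝ) ≤ |u x| ^ (γ - 1) + |w x| ^ (γ - 1))]
    have heq : γ * ((|w x| ^ (γ - 1) + |u x| ^ (γ - 1)) * |u x - w x|)
        = γ * ((|u x| ^ (γ - 1) + |w x| ^ (γ - 1)) * |u x - w x|) := by ring
    linarith [hpt, heq.le]
  -- step 2: pull out the constant and apply Hölder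
  have step2 : eLpNorm (γ • (ψ • f)) p μ ≤
      ENNReal.ofReal γ * (eLpNorm ψ q μ * eLpNorm f r μ) := by
    rw [eLpNorm_const_smul]
    have hγnn : ‖γ‖ₑ = ENNReal.ofReal γ := by
      rw [← ofReal_norm_eq_enorm, Real.norm_of_nonneg hγ0.le]
    rw [hγnn]
    exact mul_le_mul_right (eLpNorm_smul_le_mul_eLpNorm hfm hψm (hpqr := ⟨by simpa only [one_div] using hpqr.symm⟩)) _
  -- step 3: triangle inequality for ψ in L^q
  have hq1 : (1:ℝ≥0∞) ≤ q := by
    rw [hq, ENNReal.one_le_ofReal]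
    rw [le_div_iff₀ hγ1]
    linarith
  have step3 : eLpNorm ψ q μ ≤
      eLpNorm (fun x => |u x| ^ (γ - 1)) q μ + eLpNorm (fun x => |w x| ^ (γ - 1)) q μ :=
    eLpNorm_add_le (hcont.comp_aestronglyMeasurable hum) (hcont.comp_aestronglyMeasurable hwm) hq1
  -- step 4: compute L^q norms of the powers
  have hqr : q * ENNReal.ofReal (γ - 1) = r := by
    rw [hq, hr, ← ENNReal.ofReal_mul (by positivity)]
    congr 1
    field_simp
  have step4u : eLpNorm (fun x => |u x| ^ (γ - 1)) q μ = eLpNorm u r μ ^ (γ - 1) := by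
    have := eLpNorm_norm_rpow (p := q) (μ := μ) u hγ1
    simpa [Real.norm_eq_abs, hqr] using this
  have step4w : eLpNorm (fun x => |w x| ^ (γ - 1)) q μ = eLpNorm w r μ ^ (γ - 1) := by
    have := eLpNorm_norm_rpow (p := q) (μ := μ) w hγ1
    simpa [Real.norm_eq_abs, hqr] using this
  calc eLpNorm (fun x => |u x| ^ (γ - 1) * u x - |w x| ^ (γ - 1) * w x) p μ
      ≤ ENNReal.ofReal γ * (eLpNorm ψ q μ * eLpNorm f r μ) := step1.trans step2
    _ ≤ ENNReal.ofReal γ * ((eLpNorm u r μ ^ (γ - 1) + eLpNorm w r μ ^ (γ - 1))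
          * eLpNorm f r μ) := by
        gcongr
        rw [← step4u, ← step4w]
        exact step3
    _ = ENNReal.ofReal γ * (eLpNorm u r μ ^ (γ - 1) + eLpNorm w r μ ^ (γ - 1))
          * eLpNorm (u - w) r μ := by rw [mul_assoc]
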